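/- The odd chromatic number of the 5-cycle C5 equals 5. -/

import Mathlib

/-- An odd coloring of a graph: a proper coloring such that every non-isolated vertex
has some color appearing an odd number of times in its neighborhood. -/
def IsOddColoring {V α : Type*} (G : SimpleGraph V) (φ : V → α) : Prop :=
  (∀ u v : V, G.Adj u v → φ u ≠ φ v) ∧
  ∀ v : V, (∃ u, G.Adj v u) → ∃ c : α, Odd {u : V | G.Adj v u ∧ φ u = c}.ncard

/-- The odd chromatic number: the minimum number of colors in an odd coloring. -/
noncomputable def oddChromaticNumber {V : Type*} (G : SimpleGraph V) : ℕ :=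
  sInf {k : ℕ | ∃ φ : V → Fin k, IsOddColoring G φ}

open Fin.CommRing in
lemma cycle5_adj_iff (v u : Fin 5) :
    (SimpleGraph.cycleGraph 5).Adj v u ↔ (u = v - 1 ∨ u = v + 1) := by
  rw [SimpleGraph.cycleGraph_adj (n := 3)]
  constructor
  · rintro (h | h)
    · left; rw [← h]; ring
    · right; rw [← h]; ring
  · rintro (rfl | rfl)
    · left; ring
    · right; ring

open Fin.CommRing in
lemma odd_coloring_injective {k : ℕ} (φ : Fin 5 → Fin k)
    (h : IsOddColoring (SimpleGraph.cycleGraph 5) φ) : Function.Injective φ := by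
  obtain ⟨hproper, hodd⟩ := h
  -- the two neighbors of each vertex get distinct colors
  have hne : ∀ v : Fin 5, φ (v - 1) ≠ φ (v + 1) := by
    intro v heq
    obtain ⟨c, hc⟩ := hodd v ⟨v + 1, (cycle5_adj_iff v (v + 1)).2 (Or.inr rfl)⟩
    have hsub : v - 1 ≠ v + 1 := by
      intro h'
      have h2 : (2 : Fin 5) = 0 := by
        calc (2 : Fin 5) = (v + 1) - (v - 1) := by ring
        _ = (v + 1) - (v + 1) := by rw [h']
        _ = 0 := sub_self _
      exact absurd h2 (by decide)
    by_cases hc' : c = φ (v + 1)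
    · have hset : {u : Fin 5 | (SimpleGraph.cycleGraph 5).Adj v u ∧ φ u = c}
          = {v - 1, v + 1} := by
        ext u
        simp only [Set.mem_setOf_eq, cycle5_adj_iff, Set.mem_insert_iff,
          Set.mem_singleton_iff]
        constructor
        · rintro ⟨h1, _⟩; exact h1
        · rintro (rfl | rfl)
          · exact ⟨Or.inl rfl, by rw [heq, hc']⟩
          · exact ⟨Or.inr rfl, hc'.symm⟩
      rw [hset, Set.ncard_pair hsub] at hc
      exact absurd hc (by decide)
    · have hset : {u : Fin 5 | (SimpleGraph.cycleGraph 5).Adj v u ∧ φ u = c}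
          = ∅ := by
        ext u
        simp only [Set.mem_setOf_eq, Set.mem_empty_iff_false, iff_false, not_and]
        rw [cycle5_adj_iff]
        rintro (rfl | rfl)
        · intro h'; exact hc' (h'.symm.trans heq)
        · intro h'; exact hc' h'.symm
      rw [hset, Set.ncard_empty] at hc
      exact absurd hc (by decide)
  have hadj : ∀ v : Fin 5, φ v ≠ φ (v + 1) := fun v =>
    hproper v (v + 1) ((cycle5_adj_iff v (v + 1)).2 (Or.inr rfl))
  intro u w hφ
  obtain ⟨d, rfl⟩ : ∃ d, w = u + d := ⟨w - u, by ring⟩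
  fin_cases d
  · simp
  · exact absurd (by simpa using hφ) (hadj u)
  · exfalso
    apply hne (u + 1)
    have e1 : (u + 1) - 1 = u := by ring
    have e2 : (u + 1) + 1 = u + (2 : Fin 5) := by ring
    rw [e1, e2]; simpa using hφ
  · exfalso
    apply hne (u + 4)
    have e1 : (u + 4) - 1 = u + (3 : Fin 5) := by ring
    have e2 : (u + 4) + 1 = u := by
      rw [add_assoc, (show (4 : Fin 5) + 1 = 0 by decide), add_zero]
    rw [e1, e2]; simpa using hφ.symm
  · exfalso
    apply hadj (u + 4)
    have e2 : (u + 4) + 1 = u := by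
      rw [add_assoc, (show (4 : Fin 5) + 1 = 0 by decide), add_zero]
    rw [e2]; simpa using hφ.symm

lemma odd_five : IsOddColoring (SimpleGraph.cycleGraph 5) (id : Fin 5 → Fin 5) := by
  constructor
  · intro u v huv
    simpa using huv.ne
  · intro v _
    refine ⟨v + 1, ?_⟩
    have hset : {u : Fin 5 | (SimpleGraph.cycleGraph 5).Adj v u ∧ id u = v + 1}
        = {v + 1} := by
      ext u
      simp only [Set.mem_setOf_eq, Set.mem_singleton_iff, id_eq]
      exact ⟨fun h => h.2, fun h => ⟨(cycle5_adj_iff v u).2 (Or.inr h), h⟩⟩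
    rw [hset, Set.ncard_singleton]
    exact odd_one

/-- The odd chromatic number of the 5-cycle equals 5. -/
theorem oddChromaticNumber_cycleGraph_five :
    oddChromaticNumber (SimpleGraph.cycleGraph 5) = 5 := by
  have h5 : (5 : ℕ) ∈ {k : ℕ | ∃ φ : Fin 5 → Fin k, IsOddColoring (SimpleGraph.cycleGraph 5) φ} :=
    ⟨id, odd_five⟩
  refine le_antisymm (Nat.sInf_le h5) (le_csInf ⟨5, h5⟩ ?_)
  rintro k ⟨φ, hφ⟩
  have := Fintype.card_le_of_injective φ (odd_coloring_injective φ hφ)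
  simpa using this
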